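/- Let G be a locally compact group with a fixed left Haar measure and π : G → U(H) a continuous unitary representation, extended by π(f)v := ∫_G f(x)π(x)v dx. Then for every smooth δ-family {f_W}_{W∈𝒲} on G, the set {π(f_W)v : W ∈ 𝒲, v ∈ H} is a dense subset of H_∞ with respect to the topology of the space of smooth vectors H_∞. -/

import Mathlib

open Filter Topology MeasureTheory
open scoped Topology

noncomputable section

/-- The set of continuous one-parameter subgroups of a topological group `G`,
topologized as a subspace of `C(ℝ, G)` (compact-open topology, i.e. topology of
uniform convergence on compact subsets of `ℝ`). -/
def OneParam (G : Type*) [TopologicalSpace G] [Group G] : Type _ :=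
  {γ : C(ℝ, G) // ∀ t s : ℝ, γ (t + s) = γ t * γ s}

instance (G : Type*) [TopologicalSpace G] [Group G] : TopologicalSpace (OneParam G) :=
  inferInstanceAs (TopologicalSpace {γ : C(ℝ, G) // ∀ t s : ℝ, γ (t + s) = γ t * γ s})

section DirDeriv

variable {G : Type*} [TopologicalSpace G] [Group G]
variable {Y : Type*} [TopologicalSpace Y] [AddCommGroup Y] [Module ℝ Y]

/-- `φ` has directional derivative `w` at `g` along the one-parameter subgroup `γ`:
`w = lim_{t → 0} (φ(g·γ(t)) - φ(g))/t`. -/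
def HasDirDerivAt (φ : G → Y) (γ : OneParam G) (g : G) (w : Y) : Prop :=
  Tendsto (fun t : ℝ => t⁻¹ • (φ (g * γ.1 t) - φ g)) (𝓝[≠] (0 : ℝ)) (𝓝 w)

/-- The directional derivative `(D_γ φ)(g) = lim_{t → 0} (φ(g·γ(t)) - φ(g))/t`
(junk value if the limit does not exist). -/
def dirDeriv (φ : G → Y) (γ : OneParam G) (g : G) : Y :=
  haveI : Nonempty Y := ⟨0⟩
  limUnder (𝓝[≠] (0 : ℝ)) (fun t : ℝ => t⁻¹ • (φ (g * γ.1 t) - φ g))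

/-- The right directional derivative `(D^R_γ φ)(g) = lim_{t → 0} (φ(γ(-t)·g) - φ(g))/t`. -/
def rightDirDeriv (φ : G → Y) (γ : OneParam G) (g : G) : Y :=
  haveI : Nonempty Y := ⟨0⟩
  limUnder (𝓝[≠] (0 : ℝ)) (fun t : ℝ => t⁻¹ • (φ (γ.1 (-t) * g) - φ g))

/-- Iterated directional derivatives: `iteratedD φ k γ g = (D_{γ k}(⋯(D_{γ 1} φ)⋯))(g)`,
with the innermost derivative taken along `γ 0`. -/
def iteratedD (φ : G → Y) : (k : ℕ) → (Fin k → OneParam G) → G → Y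
  | 0, _ => φ
  | (k + 1), γ => dirDeriv (iteratedD φ k (fun i => γ i.castSucc)) (γ (Fin.last k))

/-- `φ ∈ C^∞(G, Y)`: `φ` is continuous and all of its iterated directional derivatives
exist everywhere and are jointly continuous. -/
def IsCSmooth (φ : G → Y) : Prop :=
  Continuous φ ∧ ∀ k : ℕ,
    (∀ (γ : Fin (k + 1) → OneParam G) (g : G),
      HasDirDerivAt (iteratedD φ k (fun i => γ i.castSucc)) (γ (Fin.last k)) g
        (iteratedD φ (k + 1) γ g)) ∧
    Continuous (fun p : (Fin (k + 1) → OneParam G) × G => iteratedD φ (k + 1) p.1 p.2)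

theorem IsCSmooth.continuous_iteratedD {φ : G → Y} (hφ : IsCSmooth φ) (k : ℕ) :
    Continuous (fun p : (Fin k → OneParam G) × G => iteratedD φ k p.1 p.2) := by
  cases k with
  | zero => exact hφ.1.comp continuous_snd
  | succ k => exact (hφ.2 k).2

end DirDeriv

/-- A continuous unitary representation of a topological group `G` on a complex
Hilbert space `H`. -/
structure UnitaryRep (G : Type*) (H : Type*) [TopologicalSpace G] [Group G]
    [NormedAddCommGroup H] [InnerProductSpace ℂ H] where
  toFun : G → H →L[ℂ] H
  map_one' : toFun 1 = 1
  map_mul' : ∀ x y : G, toFun (x * y) = (toFun x).comp (toFun y)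
  inner_map' : ∀ (x : G) (v w : H), (inner ℂ (toFun x v) (toFun x w) : ℂ) = inner ℂ v w
  surjective' : ∀ x : G, Function.Surjective (toFun x)
  continuous' : Continuous fun p : G × H => toFun p.1 p.2

namespace UnitaryRep

variable {G : Type*} [TopologicalSpace G] [Group G]
variable {H : Type*} [NormedAddCommGroup H] [InnerProductSpace ℂ H]

/-- The space of smooth vectors `H_∞` of a representation. -/
def smoothVec (π : UnitaryRep G H) : Set H :=
  {v : H | IsCSmooth fun g : G => π.toFun g v}

/-- `dπ(γ)v = lim_{t → 0} (π(γ(t))v - v)/t`. -/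
def dpi (π : UnitaryRep G H) (γ : OneParam G) (v : H) : H :=
  dirDeriv (fun g : G => π.toFun g v) γ 1

/-- The moment map `Ψ_π(v)(γ) = (1/i)⟨dπ(γ)v, v⟩/⟨v, v⟩`, viewed as an element of
`ℝ^{𝔏(G)}`. -/
def momentMap (π : UnitaryRep G H) (v : H) : OneParam G → ℝ :=
  fun γ => ((inner ℂ v (π.dpi γ v) : ℂ) / (inner ℂ v v : ℂ) / Complex.I).re

/-- The image `I⁰_π = Ψ_π(H_∞ \ {0})` of the moment map. -/
def momentSet0 (π : UnitaryRep G H) : Set (OneParam G → ℝ) :=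
  π.momentMap '' (π.smoothVec \ {0})

/-- The closed moment set `I_π`, the closure of `I⁰_π` in `ℝ^{𝔏(G)}` with the
topology of pointwise convergence. -/
def momentSet (π : UnitaryRep G H) : Set (OneParam G → ℝ) :=
  closure π.momentSet0

end UnitaryRep

end
noncomputable section

/-- The space `C^∞(G, Y)` of smooth functions, topologized below by uniform convergence
of all iterated directional derivatives on compact sets (this coincides with the locally
convex topology given by the seminorms `p_{K₁,K₂}`). -/
def SmoothFns (G : Type*) [TopologicalSpace G] [Group G]
    (Y : Type*) [TopologicalSpace Y] [AddCommGroup Y] [Module ℝ Y] : Type _ :=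
  {φ : G → Y // IsCSmooth φ}

variable {G : Type*} [TopologicalSpace G] [Group G]
variable {Y : Type*} [TopologicalSpace Y] [AddCommGroup Y] [Module ℝ Y]

/-- The `k`-th iterated derivative of a smooth function, as a continuous map. -/
def SmoothFns.iteratedDCM (f : SmoothFns G Y) (k : ℕ) :
    C((Fin k → OneParam G) × G, Y) :=
  ⟨fun p => iteratedD f.1 k p.1 p.2, f.2.continuous_iteratedD k⟩

/-- The topology of `C^∞(G, Y)`: the coarsest topology making all the maps
`f ↦ D^k f ∈ C(𝔏(G)^k × G, Y)` continuous, where the spaces of continuous maps carry the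
compact-open topology (the topology of uniform convergence on compact sets). -/
instance : TopologicalSpace (SmoothFns G Y) :=
  ⨅ k : ℕ, TopologicalSpace.induced (fun f : SmoothFns G Y => f.iteratedDCM k)
    inferInstance

namespace UnitaryRep

variable {H : Type*} [NormedAddCommGroup H] [InnerProductSpace ℂ H]

/-- The space of smooth vectors `H_∞`, as a type. -/
def SmoothVecs (π : UnitaryRep G H) : Type _ := {v : H // v ∈ π.smoothVec}

/-- The canonical injection `A : H_∞ → C^∞(G, H)`, `v ↦ π(·)v`. -/
def smoothVecEmbed (π : UnitaryRep G H) (v : π.SmoothVecs) : SmoothFns G H :=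
  ⟨fun g : G => π.toFun g v.1, v.2⟩

/-- The topology of the space of smooth vectors: the topology induced from `C^∞(G, H)`
via `A : v ↦ π(·)v`. -/
instance (π : UnitaryRep G H) : TopologicalSpace π.SmoothVecs :=
  TopologicalSpace.induced π.smoothVecEmbed inferInstance

end UnitaryRep

end
noncomputable section Aux

open Filter Topology MeasureTheory

namespace OneParam

variable {G : Type*} [TopologicalSpace G] [Group G] [IsTopologicalGroup G]

lemma continuous_coe : Continuous (fun γ : OneParam G => (γ.1 : C(ℝ, G))) :=
  continuous_induced_dom

lemma map_zero (γ : OneParam G) : γ.1 0 = 1 := by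
  have h : γ.1 0 * 1 = γ.1 0 * γ.1 0 := by simpa using (γ.2 0 0).symm
  exact (mul_left_cancel h).symm

/-- Conjugation of a one-parameter subgroup. -/
def conj (x : G) (γ : OneParam G) : OneParam G :=
  ⟨⟨fun t => x⁻¹ * γ.1 t * x,
    (continuous_const.mul (map_continuous γ.1)).mul continuous_const⟩,
    fun t s => by
      simp only [ContinuousMap.coe_mk, γ.2 t s]
      group⟩

lemma conj_apply (x : G) (γ : OneParam G) (t : ℝ) : (conj x γ).1 t = x⁻¹ * γ.1 t * x := rfl

lemma conj_one (γ : OneParam G) : conj (1 : G) γ = γ := by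
  apply Subtype.ext
  apply ContinuousMap.ext
  intro t
  simp [conj_apply]

lemma mul_conj (g x : G) (γ : OneParam G) (t : ℝ) :
    (g * x) * (conj x γ).1 t = g * γ.1 t * x := by
  rw [conj_apply]; group

lemma continuous_conj : Continuous (fun p : G × OneParam G => conj p.1 p.2) := by
  have hval : Continuous (fun p : G × OneParam G => ((conj p.1 p.2).1 : C(ℝ, G))) := by
    apply ContinuousMap.continuous_of_continuous_uncurry
    have h1 : Continuous (fun q : (G × OneParam G) × ℝ => (q.1.2.1 : C(ℝ, G)) q.2) :=
      ContinuousEval.continuous_eval.comp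
        ((continuous_coe.comp (continuous_snd.comp continuous_fst)).prodMk continuous_snd)
    exact (((continuous_fst.comp continuous_fst).inv.mul h1).mul
      (continuous_fst.comp continuous_fst))
  exact continuous_induced_rng.2 hval

end OneParam

end Aux
section Aux2

open Filter Topology MeasureTheory

variable {G : Type*} [TopologicalSpace G] [Group G] [IsTopologicalGroup G]
variable {H : Type*} [NormedAddCommGroup H] [NormedSpace ℝ H] [CompleteSpace H]
variable [MeasurableSpace G] [BorelSpace G] {μ : MeasureTheory.Measure G}
variable [MeasureTheory.IsFiniteMeasureOnCompacts μ]

lemma aux_integrable {f : G → ℝ} (hf : Continuous f) (hfc : HasCompactSupport f)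
    {h : G → H} (hh : Continuous h) : Integrable (fun x => f x • h x) μ :=
  (hf.smul hh).integrable_of_hasCompactSupport (hfc.smul_right)

lemma continuous_param_integral {X : Type*} [TopologicalSpace X]
    {f : G → ℝ} (hf : Continuous f) (hfc : HasCompactSupport f)
    {h : X → G → H} (hh : Continuous fun p : X × G => h p.1 p.2) :
    Continuous fun p : X => ∫ x, f x • h p x ∂μ := by
  rw [continuous_iff_continuousAt]
  intro p₀
  have hIint : Integrable (fun x => |f x|) μ :=
    hf.abs.integrable_of_hasCompactSupport hfc.abs
  set I := ∫ x, |f x| ∂μ with hI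
  have hInn : 0 ≤ I := integral_nonneg fun x => abs_nonneg _
  rw [ContinuousAt, Metric.tendsto_nhds]
  intro ε hε
  set ε' := ε / (2 * (I + 1)) with hε'def
  have hε' : 0 < ε' := by positivity
  have hN : IsOpen {q : X × G | ‖h q.1 q.2 - h p₀ q.2‖ < ε'} :=
    isOpen_lt (Continuous.norm
      (hh.sub (hh.comp (continuous_const.prodMk continuous_snd)))) continuous_const
  have hsubset : ({p₀} : Set X) ×ˢ tsupport f ⊆ {q : X × G | ‖h q.1 q.2 - h p₀ q.2‖ < ε'} := by
    rintro ⟨p, x⟩ ⟨hp, hx⟩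
    have hp' : p = p₀ := hp
    subst hp'
    show ‖h p x - h p x‖ < ε'
    simpa using hε'
  obtain ⟨u, v, hu, -, hp₀u, htv, huv⟩ :=
    generalized_tube_lemma isCompact_singleton hfc hN hsubset
  filter_upwards [hu.mem_nhds (hp₀u rfl)] with p hp
  have hintp : Integrable (fun x => f x • h p x) μ :=
    aux_integrable hf hfc (hh.comp (continuous_const.prodMk continuous_id))
  have hintp₀ : Integrable (fun x => f x • h p₀ x) μ :=
    aux_integrable hf hfc (hh.comp (continuous_const.prodMk continuous_id))
  rw [dist_eq_norm, ← integral_sub hintp hintp₀]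
  have hkey : ε' * (2 * (I + 1)) = ε := by
    rw [hε'def]; field_simp
  calc ‖∫ x, (f x • h p x - f x • h p₀ x) ∂μ‖ ≤ ∫ x, |f x| * ε' ∂μ := by
        apply norm_integral_le_of_norm_le (hIint.mul_const ε')
        apply MeasureTheory.ae_of_all
        intro x
        rw [← smul_sub, norm_smul, Real.norm_eq_abs]
        by_cases hx : x ∈ tsupport f
        · exact mul_le_mul_of_nonneg_left
            (le_of_lt (huv (Set.mk_mem_prod hp (htv hx)))) (abs_nonneg _)
        · simp [image_eq_zero_of_notMem_tsupport hx]
    _ = I * ε' := integral_mul_const ε' _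
    _ < ε := by nlinarith [mul_nonneg hInn hε'.le]

lemma hasDerivAt_of_hasDirDerivAt {A B : G → H} {γ : OneParam G}
    (hA : ∀ h : G, HasDirDerivAt A γ h (B h)) (h₀ : G) (t : ℝ) :
    HasDerivAt (fun s : ℝ => A (h₀ * γ.1 s)) (B (h₀ * γ.1 t)) t := by
  rw [hasDerivAt_iff_tendsto_slope]
  have key : ∀ s : ℝ, h₀ * γ.1 s = (h₀ * γ.1 t) * γ.1 (s - t) := by
    intro s
    rw [mul_assoc, ← γ.2]
    norm_num
  have h1 : Tendsto (fun s : ℝ => s - t) (𝓝[≠] t) (𝓝[≠] (0 : ℝ)) := by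
    refine tendsto_nhdsWithin_iff.2 ⟨?_, ?_⟩
    · apply tendsto_nhdsWithin_of_tendsto_nhds
      simpa using ((continuous_sub_right t).tendsto t)
    · exact eventually_mem_nhdsWithin.mono fun s hs => by
        simpa [Set.mem_compl_iff, sub_eq_zero] using hs
  have h2 := ((hA (h₀ * γ.1 t)).comp h1)
  apply h2.congr'
  filter_upwards [eventually_mem_nhdsWithin] with s hs
  simp only [Function.comp_apply, slope_def_module]
  rw [key s]

end Aux2
noncomputable section Aux3

open Filter Topology MeasureTheory

variable {G : Type*} [TopologicalSpace G] [Group G] [IsTopologicalGroup G]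
variable {H : Type*} [NormedAddCommGroup H] [NormedSpace ℝ H] [CompleteSpace H]

/-- Auxiliary: inner integrand function of the derivative of a convolution. -/
def cF (φ : G → H) (k : ℕ) (δ : Fin (k + 1) → OneParam G) (g x : G) (t : ℝ) : H :=
  iteratedD φ k (fun i => OneParam.conj x (δ i.castSucc)) (g * (δ (Fin.last k)).1 t * x)

/-- Auxiliary: its derivative in `t`. -/
def DF (φ : G → H) (k : ℕ) (δ : Fin (k + 1) → OneParam G) (g x : G) (t : ℝ) : H :=
  iteratedD φ (k + 1) (fun i => OneParam.conj x (δ i)) (g * (δ (Fin.last k)).1 t * x)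

lemma iteratedD_zero' (ψ : G → H) (γ : Fin 0 → OneParam G) : iteratedD ψ 0 γ = ψ := rfl

lemma iteratedD_succ' (ψ : G → H) (k : ℕ) (γ : Fin (k + 1) → OneParam G) :
    iteratedD ψ (k + 1) γ
      = dirDeriv (iteratedD ψ k (fun i => γ i.castSucc)) (γ (Fin.last k)) := rfl

variable [MeasurableSpace G] [BorelSpace G] {μ : MeasureTheory.Measure G}
variable [MeasureTheory.IsFiniteMeasureOnCompacts μ]

/-- The iterated derivatives of the "convolution" `g ↦ ∫ f(x) φ(g x) dx`. -/
def convD (μ : MeasureTheory.Measure G) (f : G → ℝ) (φ : G → H) (k : ℕ)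
    (γ : Fin k → OneParam G) (g : G) : H :=
  ∫ x, f x • iteratedD φ k (fun i => OneParam.conj x (γ i)) (g * x) ∂μ

variable {φ : G → H} {f : G → ℝ}

attribute [local irreducible] iteratedD

lemma cont_inner (hφ : IsCSmooth φ) (k : ℕ) :
    Continuous (fun q : G × (Fin k → OneParam G) × G =>
      iteratedD φ k (fun i => OneParam.conj q.1 (q.2.1 i)) (q.2.2 * q.1)) := by
  have hpair : Continuous (fun q : G × (Fin k → OneParam G) × G =>
      ((fun i => OneParam.conj q.1 (q.2.1 i)), q.2.2 * q.1)) := by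
    apply Continuous.prodMk
    · exact continuous_pi fun i => OneParam.continuous_conj.comp
        (continuous_fst.prodMk ((continuous_apply i).comp (continuous_fst.comp continuous_snd)))
    · exact (continuous_snd.comp continuous_snd).mul continuous_fst
  have h2 := Continuous.comp (hφ.continuous_iteratedD k) hpair
  exact h2

lemma convD_cont (hφ : IsCSmooth φ) (hf : Continuous f) (hfc : HasCompactSupport f) (k : ℕ) :
    Continuous fun p : (Fin k → OneParam G) × G => convD μ f φ k p.1 p.2 := by
  have hswap : Continuous (fun q : ((Fin k → OneParam G) × G) × G => (q.2, q.1)) :=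
    continuous_snd.prodMk continuous_fst
  have hh := Continuous.comp (cont_inner hφ k) hswap
  have h2 := continuous_param_integral (μ := μ) hf hfc
    (h := fun (p : (Fin k → OneParam G) × G) (x : G) =>
      iteratedD φ k (fun i => OneParam.conj x (p.1 i)) (p.2 * x)) hh
  exact h2

lemma cF_cont (hφ : IsCSmooth φ) (k : ℕ) (δ : Fin (k + 1) → OneParam G) (g : G) :
    Continuous (fun q : G × ℝ => cF φ k δ g q.1 q.2) := by
  have hpair : Continuous (fun q : G × ℝ =>
      (q.1, (((fun i => δ i.castSucc) : Fin k → OneParam G),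
        g * (δ (Fin.last k)).1 q.2))) :=
    continuous_fst.prodMk (continuous_const.prodMk
      (continuous_const.mul ((map_continuous (δ (Fin.last k)).1).comp continuous_snd)))
  have h2 := Continuous.comp (cont_inner hφ k) hpair
  exact h2

lemma DF_cont (hφ : IsCSmooth φ) (k : ℕ) (δ : Fin (k + 1) → OneParam G) (g : G) :
    Continuous (fun q : G × ℝ => DF φ k δ g q.1 q.2) := by
  have hpair : Continuous (fun q : G × ℝ =>
      (q.1, ((δ : Fin (k + 1) → OneParam G), g * (δ (Fin.last k)).1 q.2))) :=
    continuous_fst.prodMk (continuous_const.prodMk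
      (continuous_const.mul ((map_continuous (δ (Fin.last k)).1).comp continuous_snd)))
  have h2 := Continuous.comp (cont_inner hφ (k + 1)) hpair
  exact h2

lemma cF_hasDerivAt (hφ : IsCSmooth φ) (k : ℕ) (δ : Fin (k + 1) → OneParam G) (g : G)
    (x : G) (t : ℝ) : HasDerivAt (cF φ k δ g x) (DF φ k δ g x t) t := by
  have hA : ∀ h : G, HasDirDerivAt (iteratedD φ k (fun i => OneParam.conj x (δ i.castSucc)))
      (OneParam.conj x (δ (Fin.last k))) h
      (iteratedD φ (k + 1) (fun i => OneParam.conj x (δ i)) h) :=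
    fun h => (hφ.2 k).1 (fun i => OneParam.conj x (δ i)) h
  have h1 := hasDerivAt_of_hasDirDerivAt hA (g * x) t
  have hfun : (fun s : ℝ => iteratedD φ k (fun i => OneParam.conj x (δ i.castSucc))
      ((g * x) * (OneParam.conj x (δ (Fin.last k))).1 s)) = cF φ k δ g x := by
    funext s
    rw [OneParam.mul_conj]
    rfl
  rw [hfun, OneParam.mul_conj] at h1
  exact h1

lemma hasDirDerivAt_convD (hφ : IsCSmooth φ) (hf : Continuous f) (hfc : HasCompactSupport f)
    (hf0 : ∀ x, 0 ≤ f x) (k : ℕ) (δ : Fin (k + 1) → OneParam G) (g : G) :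
    HasDirDerivAt (convD μ f φ k (fun i => δ i.castSucc)) (δ (Fin.last k)) g
      (convD μ f φ (k + 1) δ g) := by
  have hγ0 : (δ (Fin.last k)).1 0 = 1 := OneParam.map_zero _
  have hcF_cont := cF_cont hφ k δ g
  have hDF_cont := DF_cont hφ k δ g
  have hint_c : ∀ t : ℝ, Integrable (fun x => f x • cF φ k δ g x t) μ := by
    intro t
    have hcomp : Continuous fun x : G => ((x, t) : G × ℝ) :=
      continuous_id.prodMk continuous_const
    have hc := Continuous.comp hcF_cont hcomp
    exact aux_integrable hf hfc hc
  have hint_D0 : Integrable (fun x => f x • DF φ k δ g x 0) μ := by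
    have hcomp : Continuous fun x : G => ((x, (0:ℝ)) : G × ℝ) :=
      continuous_id.prodMk continuous_const
    have hc := Continuous.comp hDF_cont hcomp
    exact aux_integrable hf hfc hc
  have hconv_t : ∀ t : ℝ, convD μ f φ k (fun i => δ i.castSucc) (g * (δ (Fin.last k)).1 t)
      = ∫ x, f x • cF φ k δ g x t ∂μ := fun t => rfl
  have hconv_0 : convD μ f φ k (fun i => δ i.castSucc) g = ∫ x, f x • cF φ k δ g x 0 ∂μ := by
    have hx : ∀ x : G, cF φ k δ g x 0
        = iteratedD φ k (fun i => OneParam.conj x (δ i.castSucc)) (g * x) := by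
      intro x
      unfold cF
      rw [hγ0, mul_one]
    simp only [convD, hx]
  have hconvD1 : convD μ f φ (k + 1) δ g = ∫ x, f x • DF φ k δ g x 0 ∂μ := by
    have hx : ∀ x : G, DF φ k δ g x 0
        = iteratedD φ (k + 1) (fun i => OneParam.conj x (δ i)) (g * x) := by
      intro x
      unfold DF
      rw [hγ0, mul_one]
    simp only [convD, hx]
  set I := ∫ x, f x ∂μ with hI
  have hInn : 0 ≤ I := integral_nonneg hf0
  show Tendsto (fun t : ℝ => t⁻¹ • (convD μ f φ k (fun i => δ i.castSucc)
      (g * (δ (Fin.last k)).1 t) - convD μ f φ k (fun i => δ i.castSucc) g))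
    (𝓝[≠] (0 : ℝ)) (𝓝 (convD μ f φ (k + 1) δ g))
  have hfun2 : (fun t : ℝ => t⁻¹ • (convD μ f φ k (fun i => δ i.castSucc)
      (g * (δ (Fin.last k)).1 t) - convD μ f φ k (fun i => δ i.castSucc) g))
      = fun t : ℝ => t⁻¹ • ((∫ x, f x • cF φ k δ g x t ∂μ) - ∫ x, f x • cF φ k δ g x 0 ∂μ) := by
    funext t
    rw [hconv_t t, hconv_0]
  rw [hfun2, hconvD1, Metric.tendsto_nhds]
  intro ε hε
  set ε' := ε / (2 * (I + 1)) with hε'def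
  have hε' : 0 < ε' := by positivity
  have hopen : IsOpen {q : G × ℝ | ‖DF φ k δ g q.1 q.2 - DF φ k δ g q.1 0‖ < ε'} :=
    by
      have hcomp : Continuous fun q : G × ℝ => ((q.1, (0:ℝ)) : G × ℝ) :=
        continuous_fst.prodMk continuous_const
      have hD0 := Continuous.comp hDF_cont hcomp
      exact isOpen_lt ((hDF_cont.sub hD0).norm) continuous_const
  have hsubset : tsupport f ×ˢ ({0} : Set ℝ)
      ⊆ {q : G × ℝ | ‖DF φ k δ g q.1 q.2 - DF φ k δ g q.1 0‖ < ε'} := by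
    intro q hq
    obtain ⟨hq1, hq2⟩ := Set.mem_prod.1 hq
    show ‖DF φ k δ g q.1 q.2 - DF φ k δ g q.1 0‖ < ε'
    rw [show q.2 = (0 : ℝ) from hq2]
    simpa using hε'
  obtain ⟨u, v, -, hv, htu, h0v, huv⟩ :=
    generalized_tube_lemma hfc isCompact_singleton hopen hsubset
  obtain ⟨r, hr, hball⟩ := Metric.isOpen_iff.1 hv 0 (h0v rfl)
  have hmain : ∀ t : ℝ, t ≠ 0 → |t| < r →
      dist (t⁻¹ • ((∫ x, f x • cF φ k δ g x t ∂μ) - ∫ x, f x • cF φ k δ g x 0 ∂μ))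
        (∫ x, f x • DF φ k δ g x 0 ∂μ) < ε := by
    intro t ht0 htr
    have hpt : ∀ x ∈ tsupport f,
        ‖t⁻¹ • (cF φ k δ g x t - cF φ k δ g x 0) - DF φ k δ g x 0‖ ≤ ε' := by
      intro x hx
      have hDx : Continuous fun s : ℝ => DF φ k δ g x s := by
        have hcomp : Continuous fun s : ℝ => ((x, s) : G × ℝ) :=
          continuous_const.prodMk continuous_id
        have hc := Continuous.comp hDF_cont hcomp
        exact hc
      have hFTC : ∫ s in (0:ℝ)..t, DF φ k δ g x s = cF φ k δ g x t - cF φ k δ g x 0 :=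
        intervalIntegral.integral_eq_sub_of_hasDerivAt (fun s _ => cF_hasDerivAt hφ k δ g x s)
          (hDx.intervalIntegrable 0 t)
      have heq : t⁻¹ • (cF φ k δ g x t - cF φ k δ g x 0) - DF φ k δ g x 0
          = t⁻¹ • ∫ s in (0:ℝ)..t, (DF φ k δ g x s - DF φ k δ g x 0) := by
        rw [intervalIntegral.integral_sub (hDx.intervalIntegrable 0 t)
          intervalIntegrable_const, hFTC, intervalIntegral.integral_const, sub_zero,
          smul_sub t⁻¹ (cF φ k δ g x t - cF φ k δ g x 0) (t • DF φ k δ g x 0),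
          smul_smul, inv_mul_cancel₀ ht0, one_smul]
      rw [heq, norm_smul, norm_inv, Real.norm_eq_abs]
      have hbound : ‖∫ s in (0:ℝ)..t, (DF φ k δ g x s - DF φ k δ g x 0)‖ ≤ ε' * |t - 0| := by
        apply intervalIntegral.norm_integral_le_of_norm_le_const
        intro s hs
        have hs' : |s| ≤ |t| := by
          rcases Set.mem_uIoc.1 hs with ⟨h1, h2⟩ | ⟨h1, h2⟩
          · rw [abs_of_pos h1, abs_of_nonneg (h1.le.trans h2)]; exact h2
          · rw [abs_of_nonpos h2, abs_of_neg (h1.trans_le h2)]; exact neg_le_neg h1.le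
        have hsv : s ∈ v := by
          apply hball
          simp only [Metric.mem_ball, Real.dist_eq, sub_zero]
          exact lt_of_le_of_lt hs' htr
        exact le_of_lt (huv (Set.mk_mem_prod (htu hx) hsv))
      calc |t|⁻¹ * ‖∫ s in (0:ℝ)..t, (DF φ k δ g x s - DF φ k δ g x 0)‖
          ≤ |t|⁻¹ * (ε' * |t - 0|) := mul_le_mul_of_nonneg_left hbound (by positivity)
        _ = ε' := by
            have habs : |t| ≠ 0 := abs_ne_zero.mpr ht0
            rw [sub_zero, mul_comm ε' |t|, ← mul_assoc, inv_mul_cancel₀ habs, one_mul]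
    have int1 : Integrable
        (fun x => t⁻¹ • (f x • cF φ k δ g x t - f x • cF φ k δ g x 0)) μ :=
      ((hint_c t).sub (hint_c 0)).smul t⁻¹
    have e1 : (∫ x, f x • cF φ k δ g x t ∂μ) - ∫ x, f x • cF φ k δ g x 0 ∂μ
        = ∫ x, (f x • cF φ k δ g x t - f x • cF φ k δ g x 0) ∂μ :=
      (integral_sub (hint_c t) (hint_c 0)).symm
    have e2 : t⁻¹ • ∫ x, (f x • cF φ k δ g x t - f x • cF φ k δ g x 0) ∂μ
        = ∫ x, t⁻¹ • (f x • cF φ k δ g x t - f x • cF φ k δ g x 0) ∂μ :=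
      (integral_smul t⁻¹ _).symm
    have e3 : (∫ x, t⁻¹ • (f x • cF φ k δ g x t - f x • cF φ k δ g x 0) ∂μ)
        - ∫ x, f x • DF φ k δ g x 0 ∂μ
        = ∫ x, (t⁻¹ • (f x • cF φ k δ g x t - f x • cF φ k δ g x 0)
            - f x • DF φ k δ g x 0) ∂μ :=
      (integral_sub int1 hint_D0).symm
    rw [dist_eq_norm, e1, e2, e3]
    have hcong : ∀ x : G, t⁻¹ • (f x • cF φ k δ g x t - f x • cF φ k δ g x 0)
        - f x • DF φ k δ g x 0
        = f x • (t⁻¹ • (cF φ k δ g x t - cF φ k δ g x 0) - DF φ k δ g x 0) := by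
      intro x
      module
    calc ‖∫ x, (t⁻¹ • (f x • cF φ k δ g x t - f x • cF φ k δ g x 0)
            - f x • DF φ k δ g x 0) ∂μ‖
        ≤ ∫ x, f x * ε' ∂μ := by
          apply norm_integral_le_of_norm_le
            ((hf.mul continuous_const).integrable_of_hasCompactSupport hfc.mul_right)
          apply MeasureTheory.ae_of_all
          intro x
          rw [hcong x, norm_smul, Real.norm_eq_abs, abs_of_nonneg (hf0 x)]
          by_cases hx : x ∈ tsupport f
          · exact mul_le_mul_of_nonneg_left (hpt x hx) (hf0 x)
          · simp [image_eq_zero_of_notMem_tsupport hx]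
      _ = I * ε' := integral_mul_const ε' _
      _ < ε := by
          have hkey : ε' * (2 * (I + 1)) = ε := by
            rw [hε'def]; field_simp
          nlinarith [mul_nonneg hInn hε'.le, hε', hInn, hkey]
  have hev1 : ∀ᶠ t : ℝ in 𝓝[≠] (0:ℝ), |t| < r := by
    apply eventually_nhdsWithin_of_eventually_nhds
    filter_upwards [Metric.ball_mem_nhds (0:ℝ) hr] with t ht
    simpa [Real.dist_eq] using ht
  filter_upwards [hev1, eventually_mem_nhdsWithin] with t htr ht0
  exact hmain t ht0 htr

lemma iteratedD_conv (hφ : IsCSmooth φ) (hf : Continuous f) (hfc : HasCompactSupport f)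
    (hf0 : ∀ x, 0 ≤ f x) :
    ∀ (k : ℕ) (γ : Fin k → OneParam G) (g : G),
      iteratedD (fun g' : G => ∫ x, f x • φ (g' * x) ∂μ) k γ g = convD μ f φ k γ g := by
  intro k
  induction k with
  | zero => intro γ g; simp only [convD, iteratedD_zero']
  | succ k ih =>
    intro γ g
    have hfunIH : iteratedD (fun g' : G => ∫ x, f x • φ (g' * x) ∂μ) k (fun i => γ i.castSucc)
        = convD μ f φ k (fun i => γ i.castSucc) := funext fun g' => ih _ g'
    simp only [iteratedD_succ']
    rw [hfunIH]
    exact (hasDirDerivAt_convD hφ hf hfc hf0 k γ g).limUnder_eq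

lemma isCSmooth_conv (hφ : IsCSmooth φ) (hf : Continuous f) (hfc : HasCompactSupport f)
    (hf0 : ∀ x, 0 ≤ f x) :
    IsCSmooth (fun g' : G => ∫ x, f x • φ (g' * x) ∂μ) := by
  constructor
  · have hfuneq : (fun g' : G => ∫ x, f x • φ (g' * x) ∂μ)
        = fun g' : G => convD μ f φ 0 Fin.elim0 g' := by
      funext g'
      simp only [convD, iteratedD_zero']
    rw [hfuneq]
    have h0 : Continuous fun p : (Fin 0 → OneParam G) × G => convD μ f φ 0 p.1 p.2 :=
      convD_cont hφ hf hfc 0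
    have hpair : Continuous fun g : G => ((Fin.elim0 : Fin 0 → OneParam G), g) :=
      continuous_const.prodMk continuous_id
    have h2 := Continuous.comp h0 hpair
    exact h2
  · intro k
    constructor
    · intro γ g
      have h1 : iteratedD (fun g' : G => ∫ x, f x • φ (g' * x) ∂μ) k (fun i => γ i.castSucc)
          = convD μ f φ k (fun i => γ i.castSucc) :=
        funext fun g' => iteratedD_conv hφ hf hfc hf0 k _ g'
      rw [h1, iteratedD_conv hφ hf hfc hf0 (k + 1) γ g]
      exact hasDirDerivAt_convD hφ hf hfc hf0 k γ g
    · have h2 : (fun p : (Fin (k + 1) → OneParam G) × G =>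
          iteratedD (fun g' : G => ∫ x, f x • φ (g' * x) ∂μ) (k + 1) p.1 p.2)
          = fun p => convD μ f φ (k + 1) p.1 p.2 :=
        funext fun p => iteratedD_conv hφ hf hfc hf0 (k + 1) p.1 p.2
      rw [h2]
      exact convD_cont hφ hf hfc (k + 1)

lemma convD_approx (hφ : IsCSmooth φ) (k : ℕ) (K₁ : Set (Fin k → OneParam G)) (K₂ : Set G)
    (hK₁ : IsCompact K₁) (hK₂ : IsCompact K₂) {ε : ℝ} (hε : 0 < ε) :
    ∃ V ∈ 𝓝 (1 : G), ∀ f : G → ℝ, Continuous f → HasCompactSupport f → (∀ x, 0 ≤ f x) →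
      tsupport f ⊆ V → (∫ x, f x ∂μ) = 1 →
      ∀ γ ∈ K₁, ∀ g ∈ K₂, ‖convD μ f φ k γ g - iteratedD φ k γ g‖ < ε := by
  set h : G × ((Fin k → OneParam G) × G) → H := fun q =>
    iteratedD φ k (fun i => OneParam.conj q.1 (q.2.1 i)) (q.2.2 * q.1)
      - iteratedD φ k q.2.1 q.2.2 with hh
  have hcont : Continuous h :=
    (cont_inner hφ k).sub ((hφ.continuous_iteratedD k).comp continuous_snd)
  have hzero : ∀ p : (Fin k → OneParam G) × G, h (1, p) = 0 := by
    intro p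
    show iteratedD φ k (fun i => OneParam.conj (1 : G) (p.1 i)) (p.2 * 1)
      - iteratedD φ k p.1 p.2 = 0
    rw [show (fun i => OneParam.conj (1 : G) (p.1 i)) = p.1 from
      funext fun i => OneParam.conj_one _, mul_one, sub_self]
  have hopen : IsOpen {q : G × ((Fin k → OneParam G) × G) | ‖h q‖ < ε / 2} :=
    isOpen_lt hcont.norm continuous_const
  have hsubset : ({1} : Set G) ×ˢ (K₁ ×ˢ K₂)
      ⊆ {q : G × ((Fin k → OneParam G) × G) | ‖h q‖ < ε / 2} := by
    intro q hq
    obtain ⟨hq1, hq2⟩ := Set.mem_prod.1 hq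
    show ‖h q‖ < ε / 2
    have hq' : q = (1, q.2) := Prod.ext hq1 rfl
    rw [hq', hzero, norm_zero]
    exact half_pos hε
  obtain ⟨V', v, hV'o, -, h1V', hKv, hsub⟩ :=
    generalized_tube_lemma isCompact_singleton (hK₁.prod hK₂) hopen hsubset
  refine ⟨V', hV'o.mem_nhds (h1V' rfl), ?_⟩
  intro f hf hfc hf0 hsupp hint γ hγ g hg
  have hinner_cont : Continuous fun x : G =>
      iteratedD φ k (fun i => OneParam.conj x (γ i)) (g * x) := by
    have hpair : Continuous fun x : G => (x, ((γ, g) : (Fin k → OneParam G) × G)) :=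
      continuous_id.prodMk continuous_const
    have h2 := Continuous.comp (cont_inner hφ k) hpair
    exact h2
  have hrepr : convD μ f φ k γ g - iteratedD φ k γ g = ∫ x, f x • h (x, (γ, g)) ∂μ := by
    have hconst : iteratedD φ k γ g = ∫ x, f x • iteratedD φ k γ g ∂μ := by
      rw [integral_smul_const, hint, one_smul]
    have h1 : convD μ f φ k γ g
        = ∫ x, f x • iteratedD φ k (fun i => OneParam.conj x (γ i)) (g * x) ∂μ := rfl
    rw [h1, hconst, ← integral_sub (aux_integrable hf hfc hinner_cont)
      (aux_integrable hf hfc continuous_const)]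
    simp only [hh, smul_sub]
  rw [hrepr]
  calc ‖∫ x, f x • h (x, (γ, g)) ∂μ‖ ≤ ∫ x, f x * (ε / 2) ∂μ := by
        apply norm_integral_le_of_norm_le
          ((hf.mul continuous_const).integrable_of_hasCompactSupport hfc.mul_right)
        apply MeasureTheory.ae_of_all
        intro x
        rw [norm_smul, Real.norm_eq_abs, abs_of_nonneg (hf0 x)]
        by_cases hx : x ∈ tsupport f
        · exact mul_le_mul_of_nonneg_left
            (le_of_lt (hsub (Set.mk_mem_prod (hsupp hx)
              (hKv (Set.mk_mem_prod hγ hg))))) (hf0 x)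
        · simp [image_eq_zero_of_notMem_tsupport hx]
    _ = (∫ x, f x ∂μ) * (ε / 2) := integral_mul_const (ε / 2) _
    _ < ε := by rw [hint]; linarith

end Aux3
noncomputable section Aux4

open Filter Topology MeasureTheory

variable {G : Type*} [TopologicalSpace G] [Group G] [IsTopologicalGroup G]
variable {H : Type*} [NormedAddCommGroup H] [NormedSpace ℝ H] [CompleteSpace H]

lemma iteratedD_zero_fun : ∀ (k : ℕ) (γ : Fin k → OneParam G) (g : G),
    iteratedD (fun _ : G => (0 : H)) k γ g = 0 := by
  intro k
  induction k with
  | zero => intro γ g; rfl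
  | succ k ih =>
    intro γ g
    have h : iteratedD (fun _ : G => (0 : H)) k (fun i => γ i.castSucc) = fun _ => (0 : H) :=
      funext fun g' => ih _ g'
    rw [iteratedD_succ', h]
    have htend : Tendsto (fun t : ℝ => t⁻¹ • (((fun _ : G => (0 : H)) (g * (γ (Fin.last k)).1 t))
        - (fun _ : G => (0 : H)) g)) (𝓝[≠] (0 : ℝ)) (𝓝 (0 : H)) := by
      simpa using (tendsto_const_nhds : Tendsto (fun _ : ℝ => (0 : H)) (𝓝[≠] (0 : ℝ)) (𝓝 (0 : H)))
    exact htend.limUnder_eq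

lemma isCSmooth_zero : IsCSmooth (fun _ : G => (0 : H)) := by
  constructor
  · exact continuous_const
  · intro k
    constructor
    · intro γ g
      have hA : iteratedD (fun _ : G => (0 : H)) k (fun i => γ i.castSucc) = fun _ => (0 : H) :=
        funext fun g' => iteratedD_zero_fun k _ g'
      rw [hA, iteratedD_zero_fun]
      have htend : Tendsto (fun t : ℝ => t⁻¹ • (((fun _ : G => (0 : H)) (g * (γ (Fin.last k)).1 t))
          - (fun _ : G => (0 : H)) g)) (𝓝[≠] (0 : ℝ)) (𝓝 (0 : H)) := by
        simpa using (tendsto_const_nhds : Tendsto (fun _ : ℝ => (0 : H)) (𝓝[≠] (0 : ℝ)) (𝓝 (0 : H)))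
      exact htend
    · have h2 : (fun p : (Fin (k + 1) → OneParam G) × G =>
          iteratedD (fun _ : G => (0 : H)) (k + 1) p.1 p.2) = fun _ => (0 : H) :=
        funext fun p => iteratedD_zero_fun _ _ _
      rw [h2]
      exact continuous_const

end Aux4

noncomputable section Rep

open Filter Topology MeasureTheory

variable {G : Type*} [TopologicalSpace G] [Group G] [IsTopologicalGroup G]
variable [MeasurableSpace G] [BorelSpace G] {μ : MeasureTheory.Measure G}
variable [MeasureTheory.IsFiniteMeasureOnCompacts μ]
variable {H : Type*} [NormedAddCommGroup H] [InnerProductSpace ℂ H] [CompleteSpace H]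

lemma rep_integral_comm (π : UnitaryRep G H) {f : G → ℝ} (hf : Continuous f)
    (hfc : HasCompactSupport f) (v : H) (g : G) :
    π.toFun g (∫ x, f x • π.toFun x v ∂μ) = ∫ x, f x • π.toFun (g * x) v ∂μ := by
  have hcontv : Continuous fun x : G => π.toFun x v := by
    have hpair : Continuous fun x : G => ((x, v) : G × H) :=
      continuous_id.prodMk continuous_const
    have h2 := Continuous.comp π.continuous' hpair
    exact h2
  have hint : Integrable (fun x => f x • π.toFun x v) μ := aux_integrable hf hfc hcontv
  rw [← ContinuousLinearMap.integral_comp_comm (π.toFun g) hint]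
  apply integral_congr_ae
  apply MeasureTheory.ae_of_all
  intro x
  show π.toFun g (f x • π.toFun x v) = f x • π.toFun (g * x) v
  rw [ContinuousLinearMap.map_smul_of_tower, π.map_mul']
  rfl

end Rep
/-- For a locally compact group `G` with left Haar measure `μ`, a continuous unitary
representation `π`, and any smooth δ-family `{f_W}_{W ∈ 𝒲}` on `G`, the set
`{π(f_W)v : W ∈ 𝒲, v ∈ H}` is dense in the space of smooth vectors `H_∞`. -/
theorem dense_range_smooth_delta_family
    (G : Type*) [TopologicalSpace G] [Group G] [IsTopologicalGroup G]
    [LocallyCompactSpace G] [MeasurableSpace G] [BorelSpace G]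
    (μ : MeasureTheory.Measure G) [μ.IsHaarMeasure]
    (H : Type*) [NormedAddCommGroup H] [InnerProductSpace ℂ H] [CompleteSpace H]
    (π : UnitaryRep G H)
    (𝒲 : Set (Set G))
    (h𝒲_nhds : ∀ W ∈ 𝒲, W ∈ 𝓝 (1 : G))
    (h𝒲_basis : ∀ U ∈ 𝓝 (1 : G), ∃ W ∈ 𝒲, W ⊆ U)
    (f : Set G → G → ℝ)
    (hf_smooth : ∀ W ∈ 𝒲, IsCSmooth (f W))
    (hf_nonneg : ∀ W ∈ 𝒲, ∀ x : G, 0 ≤ f W x)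
    (hf_supp : ∀ W ∈ 𝒲, tsupport (f W) ⊆ W)
    (hf_int : ∀ W ∈ 𝒲, ∫ x, f W x ∂μ = 1) :
    Dense {u : π.SmoothVecs | ∃ W ∈ 𝒲, ∃ v : H,
      (u.1 : H) = ∫ x, f W x • π.toFun x v ∂μ} := by
  classical
  obtain ⟨V₀, hV₀c, hV₀n⟩ := exists_compact_mem_nhds (1 : G)
  obtain ⟨W₀, hW₀W, -⟩ := h𝒲_basis Set.univ Filter.univ_mem
  have hzero_smooth : (0 : H) ∈ π.smoothVec := by
    show IsCSmooth fun g : G => π.toFun g 0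
    have hzf : (fun g : G => π.toFun g 0) = fun _ : G => (0 : H) :=
      funext fun g => map_zero (π.toFun g)
    rw [hzf]
    exact isCSmooth_zero
  intro u
  set S : Set π.SmoothVecs := {w : π.SmoothVecs | ∃ W ∈ 𝒲, ∃ v : H,
    (w.1 : H) = ∫ x, f W x • π.toFun x v ∂μ} with hS
  have hu_smooth : IsCSmooth (fun g : G => π.toFun g u.1) := u.2
  have hWex : ∀ U : {U : Set G // U ∈ 𝓝 (1 : G)}, ∃ W ∈ 𝒲, W ⊆ U.1 :=
    fun U => h𝒲_basis U.1 U.2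
  choose Wc hWc𝒲 hWcsub using hWex
  have hfcont : ∀ U, Continuous (f (Wc U)) := fun U => (hf_smooth _ (hWc𝒲 U)).1
  have hfCS : ∀ U, Wc U ⊆ V₀ → HasCompactSupport (f (Wc U)) := fun U h =>
    hV₀c.of_isClosed_subset (isClosed_tsupport _) ((hf_supp _ (hWc𝒲 U)).trans h)
  have hsm : ∀ U, Wc U ⊆ V₀ → (∫ x, f (Wc U) x • π.toFun x u.1 ∂μ) ∈ π.smoothVec := by
    intro U h
    show IsCSmooth fun g : G => π.toFun g (∫ x, f (Wc U) x • π.toFun x u.1 ∂μ)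
    have heq : (fun g : G => π.toFun g (∫ x, f (Wc U) x • π.toFun x u.1 ∂μ))
        = fun g : G => ∫ x, f (Wc U) x • π.toFun (g * x) u.1 ∂μ :=
      funext fun g => rep_integral_comm π (hfcont U) (hfCS U h) u.1 g
    rw [heq]
    exact isCSmooth_conv (φ := fun g : G => π.toFun g u.1) hu_smooth (hfcont U) (hfCS U h)
      (hf_nonneg _ (hWc𝒲 U))
  set m : {U : Set G // U ∈ 𝓝 (1 : G)} → π.SmoothVecs := fun U =>
    if h : Wc U ⊆ V₀ then ⟨_, hsm U h⟩ else ⟨0, hzero_smooth⟩ with hm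
  have hmS : ∀ U, m U ∈ S := by
    intro U
    by_cases h : Wc U ⊆ V₀
    · refine ⟨Wc U, hWc𝒲 U, u.1, ?_⟩
      simp only [hm, h, ↓reduceDIte]
    · refine ⟨W₀, hW₀W, 0, ?_⟩
      simp only [hm, h, ↓reduceDIte]
      simp
  set L : Filter {U : Set G // U ∈ 𝓝 (1 : G)} :=
    Filter.comap Subtype.val (Filter.smallSets (𝓝 (1 : G))) with hL
  have hLne : L.NeBot := by
    rw [hL]
    apply Filter.comap_neBot
    intro t ht
    obtain ⟨s, hs, hsub⟩ := (Filter.hasBasis_smallSets _).mem_iff.1 ht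
    exact ⟨⟨s, hs⟩, hsub Set.Subset.rfl⟩
  haveI := hLne
  have hVsub_ev : ∀ V ∈ 𝓝 (1 : G), ∀ᶠ U in L, (Wc U ⊆ V) := by
    intro V hV
    have h1 : ∀ᶠ t in Filter.smallSets (𝓝 (1 : G)), t ⊆ V :=
      Filter.eventually_smallSets_subset.2 hV
    have htc : Filter.Tendsto (Subtype.val : {U : Set G // U ∈ 𝓝 (1 : G)} → Set G) L
        (Filter.smallSets (𝓝 (1 : G))) := by
      rw [hL]; exact Filter.tendsto_comap
    have h2 : ∀ᶠ U in L, (U : {U : Set G // U ∈ 𝓝 (1 : G)}).1 ⊆ V := htc.eventually h1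
    filter_upwards [h2] with U hU
    exact (hWcsub U).trans hU
  have hTendEmbed : Filter.Tendsto (fun U => π.smoothVecEmbed (m U)) L
      (𝓝 (π.smoothVecEmbed u)) := by
    have hnh : 𝓝 (π.smoothVecEmbed u) = ⨅ k : ℕ, Filter.comap
        (fun fn : SmoothFns G H => fn.iteratedDCM k)
        (𝓝 ((π.smoothVecEmbed u).iteratedDCM k)) := by
      have h1 := @nhds_iInf (SmoothFns G H) ℕ
        (fun k => TopologicalSpace.induced
          (fun fn : SmoothFns G H => fn.iteratedDCM k) inferInstance)
        (π.smoothVecEmbed u)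
      have h2 : (⨅ k : ℕ, @nhds (SmoothFns G H) (TopologicalSpace.induced
          (fun fn : SmoothFns G H => fn.iteratedDCM k) inferInstance) (π.smoothVecEmbed u))
          = ⨅ k : ℕ, Filter.comap (fun fn : SmoothFns G H => fn.iteratedDCM k)
            (𝓝 ((π.smoothVecEmbed u).iteratedDCM k)) :=
        iInf_congr fun k => nhds_induced _ _
      exact h1.trans h2
    rw [hnh, Filter.tendsto_iInf]
    intro k
    rw [Filter.tendsto_comap_iff]
    rw [ContinuousMap.tendsto_iff_forall_isCompact_tendstoUniformlyOn]
    intro K hK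
    rw [Metric.tendstoUniformlyOn_iff]
    intro ε hε
    obtain ⟨V, hV, hVP⟩ := convD_approx (μ := μ) hu_smooth k
      (Prod.fst '' K) (Prod.snd '' K) (hK.image continuous_fst) (hK.image continuous_snd) hε
    filter_upwards [hVsub_ev (V ∩ V₀) (Filter.inter_mem hV hV₀n)] with U hU
    intro p hp
    have hWV₀ : Wc U ⊆ V₀ := hU.trans Set.inter_subset_right
    have hWV : tsupport (f (Wc U)) ⊆ V :=
      (hf_supp _ (hWc𝒲 U)).trans (hU.trans Set.inter_subset_left)
    have hmU : m U = ⟨∫ x, f (Wc U) x • π.toFun x u.1 ∂μ, hsm U hWV₀⟩ := by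
      simp only [hm, hWV₀, ↓reduceDIte]
      rfl
    have hfun : (π.smoothVecEmbed (m U)).1
        = fun g : G => ∫ x, f (Wc U) x • π.toFun (g * x) u.1 ∂μ := by
      funext g
      show π.toFun g (m U).1 = _
      rw [hmU]
      exact rep_integral_comm π (hfcont U) (hfCS U hWV₀) u.1 g
    have hDk : ((π.smoothVecEmbed (m U)).iteratedDCM k) p
        = convD μ (f (Wc U)) (fun g : G => π.toFun g u.1) k p.1 p.2 := by
      show iteratedD (π.smoothVecEmbed (m U)).1 k p.1 p.2 = _
      rw [hfun]
      exact iteratedD_conv hu_smooth (hfcont U) (hfCS U hWV₀)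
        (hf_nonneg _ (hWc𝒲 U)) k p.1 p.2
    have htarget : ((π.smoothVecEmbed u).iteratedDCM k) p
        = iteratedD (fun g : G => π.toFun g u.1) k p.1 p.2 := rfl
    have hdist : dist (((π.smoothVecEmbed u).iteratedDCM k) p)
        (((π.smoothVecEmbed (m U)).iteratedDCM k) p) < ε := by
      rw [htarget, hDk, dist_eq_norm, norm_sub_rev]
      exact hVP (f (Wc U)) (hfcont U) (hfCS U hWV₀) (hf_nonneg _ (hWc𝒲 U)) hWV
        (hf_int _ (hWc𝒲 U)) p.1 ⟨p, hp, rfl⟩ p.2 ⟨p, hp, rfl⟩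
    exact hdist
  have hTend : Filter.Tendsto m L (𝓝 u) := by
    have hni : 𝓝 u = Filter.comap π.smoothVecEmbed (𝓝 (π.smoothVecEmbed u)) :=
      nhds_induced _ _
    rw [hni, Filter.tendsto_comap_iff]
    exact hTendEmbed
  exact mem_closure_of_tendsto hTend (Filter.Eventually.of_forall hmS)
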